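/- Let σ > 2 be a real number. There exists a constant C > 0 such that for all complex numbers φ₁, ψ₁, φ₂, ψ₂, | |φ₁|^{2(σ-2)} Im(ψ₁² conj(φ₁)²) − |φ₂|^{2(σ-2)} Im(ψ₂² conj(φ₂)²) | ≤ C (|φ₁ − φ₂| + |ψ₁ − ψ₂|) · (|φ₁| + |ψ₁| + |φ₂| + |ψ₂|)^{2σ - 1}. -/

import Mathlib

set_option maxHeartbeats 1000000

lemma bern (a t : ℝ) (ha : 0 < a) (ht0 : 0 ≤ t) (ht1 : t ≤ 1) :
    1 - t ^ a ≤ max 1 a * (1 - t) := by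
  rcases le_or_gt a 1 with h | h
  · have hta : t ≤ t ^ a := by
      rcases eq_or_lt_of_le ht0 with h0 | h0
      · simp [← h0, Real.zero_rpow ha.ne']
      · calc t = t ^ (1:ℝ) := (Real.rpow_one t).symm
          _ ≤ t ^ a := Real.rpow_le_rpow_of_exponent_ge h0 ht1 h
    have : (1:ℝ) ≤ max 1 a := le_max_left 1 a
    nlinarith
  · have hb := one_add_mul_self_le_rpow_one_add (s := t - 1) (by linarith) (p := a) h.le
    have : (1 + (t-1)) ^ a = t ^ a := by norm_num
    rw [this] at hb
    have : a ≤ max 1 a := le_max_right 1 a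
    nlinarith

lemma key (a x y : ℝ) (ha : 0 < a) (hy : 0 ≤ y) (hxy : y ≤ x) :
    x ^ 2 * (x ^ a - y ^ a) ≤ max 1 a * (x - y) * x ^ (a + 1) := by
  rcases eq_or_lt_of_le (hy.trans hxy) with h0 | hx
  · have hx0 : x = 0 := h0.symm
    have hy0 : y = 0 := le_antisymm (hxy.trans_eq hx0) hy
    simp [hx0, hy0, Real.zero_rpow ha.ne', Real.zero_rpow (by positivity : a + 1 ≠ 0)]
  · have ht0 : 0 ≤ y / x := div_nonneg hy hx.le
    have ht1 : y / x ≤ 1 := (div_le_one hx).mpr hxy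
    have hb := bern a (y/x) ha ht0 ht1
    have hdiv : (y / x) ^ a = y ^ a / x ^ a := Real.div_rpow hy hx.le a
    rw [hdiv] at hb
    have hxa : (0:ℝ) < x ^ a := Real.rpow_pos_of_pos hx a
    have hA : x ^ a - y ^ a ≤ max 1 a * (1 - y/x) * x ^ a := by
      have := mul_le_mul_of_nonneg_right hb hxa.le
      calc x ^ a - y ^ a = (1 - y ^ a / x ^ a) * x ^ a := by field_simp
        _ ≤ (max 1 a * (1 - y/x)) * x ^ a := this
        _ = max 1 a * (1 - y/x) * x ^ a := by ring
    have hx2 : (0:ℝ) ≤ x ^ 2 := sq_nonneg x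
    have := mul_le_mul_of_nonneg_left hA hx2
    calc x ^ 2 * (x ^ a - y ^ a) ≤ x ^ 2 * (max 1 a * (1 - y/x) * x ^ a) := this
      _ = max 1 a * (x - y) * (x ^ a * x) := by field_simp
      _ = max 1 a * (x - y) * x ^ (a + 1) := by rw [Real.rpow_add_one hx.ne']

lemma mul3 {a b c a' b' c' : ℝ} (ha : 0 ≤ a) (hb : 0 ≤ b) (hc : 0 ≤ c)
    (h1 : a ≤ a') (h2 : b ≤ b') (h3 : c ≤ c') : a * b * c ≤ a' * b' * c' :=
  mul_le_mul (mul_le_mul h1 h2 hb (ha.trans h1)) h3 hc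
    (mul_nonneg (ha.trans h1) (hb.trans h2))

theorem stmt3 (σ : ℝ) (hσ : 2 < σ) :
    ∃ C > 0, ∀ φ₁ ψ₁ φ₂ ψ₂ : ℂ,
      |‖φ₁‖ ^ (2 * (σ - 2)) * (ψ₁ ^ 2 * ((starRingEnd ℂ) φ₁) ^ 2).im
          - ‖φ₂‖ ^ (2 * (σ - 2)) * (ψ₂ ^ 2 * ((starRingEnd ℂ) φ₂) ^ 2).im|
        ≤ C * (‖φ₁ - φ₂‖ + ‖ψ₁ - ψ₂‖)
          * (‖φ₁‖ + ‖ψ₁‖ + ‖φ₂‖ + ‖ψ₂‖) ^ (2 * σ - 1) := by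
  set a := 2 * (σ - 2) with ha_def
  have ha : 0 < a := by rw [ha_def]; linarith
  set K := max 1 a with hK_def
  have hK : 0 < K := lt_of_lt_of_le one_pos (le_max_left 1 a)
  refine ⟨2 + K, by linarith, ?_⟩
  intro φ₁ ψ₁ φ₂ ψ₂
  set r1 := ‖φ₁‖ with hr1
  set s1 := ‖ψ₁‖ with hs1
  set r2 := ‖φ₂‖ with hr2
  set s2 := ‖ψ₂‖ with hs2
  set w1 := ψ₁ ^ 2 * ((starRingEnd ℂ) φ₁) ^ 2 with hw1
  set w2 := ψ₂ ^ 2 * ((starRingEnd ℂ) φ₂) ^ 2 with hw2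
  set M := r1 + s1 + r2 + s2 with hM_def
  set δ := ‖φ₁ - φ₂‖ + ‖ψ₁ - ψ₂‖ with hδ_def
  have hr1n : 0 ≤ r1 := norm_nonneg _
  have hs1n : 0 ≤ s1 := norm_nonneg _
  have hr2n : 0 ≤ r2 := norm_nonneg _
  have hs2n : 0 ≤ s2 := norm_nonneg _
  have hδn : 0 ≤ δ := add_nonneg (norm_nonneg _) (norm_nonneg _)
  have hMn : 0 ≤ M := by positivity
  have hexp : 2 * σ - 1 = a + 3 := by rw [ha_def]; ring
  rw [hexp]
  clear_value a K r1 s1 r2 s2 w1 w2 M δ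
  rcases eq_or_lt_of_le hMn with hM0 | hM
  · -- M = 0 case
    have h1 : φ₁ = 0 := by
      have : r1 = 0 := by linarith
      rw [hr1] at this; exact norm_eq_zero.mp this
    have h2 : ψ₁ = 0 := by
      have : s1 = 0 := by linarith
      rw [hs1] at this; exact norm_eq_zero.mp this
    have h3 : φ₂ = 0 := by
      have : r2 = 0 := by linarith
      rw [hr2] at this; exact norm_eq_zero.mp this
    have h4 : ψ₂ = 0 := by
      have : s2 = 0 := by linarith
      rw [hs2] at this; exact norm_eq_zero.mp this
    simp [hw1, hw2, h1, h2, h3, h4, hr1, hr2, hδ_def, hM_def, hs1, hs2,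
      Real.zero_rpow ha.ne']
  · -- main case
    have habs_r : |r1 - r2| ≤ ‖φ₁ - φ₂‖ := by
      rw [hr1, hr2]; exact abs_norm_sub_norm_le φ₁ φ₂
    have hrδ : |r1 - r2| ≤ δ := by
      rw [hδ_def]; exact habs_r.trans (le_add_of_nonneg_right (norm_nonneg _))
    -- bound |w1.im - w2.im|
    have him : |w1.im - w2.im| ≤ ‖w1 - w2‖ := by
      have := Complex.abs_im_le_norm (w1 - w2)
      simpa [Complex.sub_im] using this
    have hψδ : ‖ψ₁ - ψ₂‖ ≤ δ := by
      rw [hδ_def]; exact le_add_of_nonneg_left (norm_nonneg _)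
    have hφδ : ‖φ₁ - φ₂‖ ≤ δ := by
      rw [hδ_def]; exact le_add_of_nonneg_right (norm_nonneg _)
    have hw12 : ‖w1 - w2‖ ≤ 2 * δ * M ^ 3 := by
      have hdec : w1 - w2 = (ψ₁ - ψ₂) * (ψ₁ + ψ₂) * ((starRingEnd ℂ) φ₁) ^ 2
          + ψ₂ ^ 2 * ((starRingEnd ℂ) ((φ₁ - φ₂) * (φ₁ + φ₂))) := by
        rw [hw1, hw2]; push_cast [map_mul, map_sub, map_add]; ring
      have hb1 : ‖(ψ₁ - ψ₂) * (ψ₁ + ψ₂) * ((starRingEnd ℂ) φ₁) ^ 2‖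
          ≤ δ * M * M ^ 2 := by
        rw [norm_mul, norm_mul, norm_pow, Complex.norm_conj]
        refine mul3 (norm_nonneg _) (norm_nonneg _) (by positivity) hψδ
          ((norm_add_le _ _).trans (by rw [hM_def]; nlinarith)) ?_
        have : r1 ≤ M := by rw [hM_def]; linarith
        nlinarith
      have hb2 : ‖ψ₂ ^ 2 * ((starRingEnd ℂ) ((φ₁ - φ₂) * (φ₁ + φ₂)))‖
          ≤ M ^ 2 * (δ * M) := by
        rw [norm_mul, norm_pow, Complex.norm_conj, norm_mul, ← hs2]
        have h1 : s2 ^ 2 ≤ M ^ 2 := by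
          have : s2 ≤ M := by rw [hM_def]; linarith
          nlinarith
        have h2 : ‖φ₁ - φ₂‖ * ‖φ₁ + φ₂‖ ≤ δ * M := by
          refine mul_le_mul hφδ ((norm_add_le _ _).trans ?_) (norm_nonneg _) hδn
          rw [hM_def]; linarith
        exact mul_le_mul h1 h2 (by positivity) (by positivity)
      calc ‖w1 - w2‖ ≤ _ := hdec ▸ norm_add_le _ _
        _ ≤ δ * M * M ^ 2 + M ^ 2 * (δ * M) := add_le_add hb1 hb2
        _ = 2 * δ * M ^ 3 := by ring
    -- first term
    have hr1M : r1 ≤ M := by rw [hM_def]; linarith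
    have hr2M : r2 ≤ M := by rw [hM_def]; linarith
    have hr1a : r1 ^ a ≤ M ^ a := Real.rpow_le_rpow hr1n hr1M ha.le
    have hT1 : r1 ^ a * |w1.im - w2.im| ≤ M ^ a * (2 * δ * M ^ 3) :=
      mul_le_mul hr1a (him.trans hw12) (abs_nonneg _) (Real.rpow_nonneg hMn a)
    -- second term
    have hw2im : |w2.im| ≤ s2 ^ 2 * r2 ^ 2 := by
      have h := Complex.abs_im_le_norm w2
      have : ‖w2‖ = s2 ^ 2 * r2 ^ 2 := by
        rw [hw2, norm_mul, norm_pow, norm_pow, Complex.norm_conj, ← hs2, ← hr2]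
      linarith [h.trans_eq this]
    have hT2 : |r1 ^ a - r2 ^ a| * |w2.im| ≤ K * δ * M ^ (a + 1) * M ^ 2 := by
      have hMa1 : 0 ≤ M ^ (a+1) := Real.rpow_nonneg hMn _
      have hs2M : s2 ^ 2 ≤ M ^ 2 := by nlinarith [show s2 ≤ M by rw [hM_def]; linarith]
      rcases le_total r2 r1 with hc | hc
      · have habs : |r1 ^ a - r2 ^ a| = r1 ^ a - r2 ^ a :=
          abs_of_nonneg (sub_nonneg.mpr (Real.rpow_le_rpow hr2n hc ha.le))
        have hk := key a r1 r2 ha hr2n hc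
        rw [← hK_def] at hk
        have hstep : (r1 ^ a - r2 ^ a) * (s2 ^ 2 * r2 ^ 2) ≤ K * (r1 - r2) * r1 ^ (a+1) * M ^ 2 := by
          have hd : 0 ≤ r1 ^ a - r2 ^ a := sub_nonneg.mpr (Real.rpow_le_rpow hr2n hc ha.le)
          have hsq : r2 ^ 2 ≤ r1 ^ 2 := by nlinarith
          have h1 : (r1 ^ a - r2 ^ a) * r2 ^ 2 ≤ r1 ^ 2 * (r1 ^ a - r2 ^ a) :=
            (mul_le_mul_of_nonneg_left hsq hd).trans_eq (mul_comm _ _)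
          calc (r1 ^ a - r2 ^ a) * (s2 ^ 2 * r2 ^ 2)
              = ((r1 ^ a - r2 ^ a) * r2 ^ 2) * s2 ^ 2 := by ring
            _ ≤ (K * (r1 - r2) * r1 ^ (a+1)) * M ^ 2 := by
                refine mul_le_mul (h1.trans hk) hs2M (by positivity) ?_
                have : 0 ≤ r1 - r2 := by linarith
                positivity
            _ = K * (r1 - r2) * r1 ^ (a+1) * M ^ 2 := by ring
        have hr12δ : r1 - r2 ≤ δ := (le_abs_self _).trans hrδ
        have hr1a1 : r1 ^ (a+1) ≤ M ^ (a+1) := Real.rpow_le_rpow hr1n hr1M (by linarith)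
        calc |r1 ^ a - r2 ^ a| * |w2.im| ≤ (r1 ^ a - r2 ^ a) * (s2 ^ 2 * r2 ^ 2) := by
              rw [habs]
              exact mul_le_mul_of_nonneg_left hw2im (sub_nonneg.mpr (Real.rpow_le_rpow hr2n hc ha.le))
          _ ≤ K * (r1 - r2) * r1 ^ (a+1) * M ^ 2 := hstep
          _ ≤ K * δ * M ^ (a+1) * M ^ 2 := by
              refine mul_le_mul_of_nonneg_right ?_ (by positivity)
              refine mul3 hK.le (by linarith) (Real.rpow_nonneg hr1n _) le_rfl hr12δ hr1a1
      · have habs : |r1 ^ a - r2 ^ a| = r2 ^ a - r1 ^ a := by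
          rw [abs_sub_comm]
          exact abs_of_nonneg (sub_nonneg.mpr (Real.rpow_le_rpow hr1n hc ha.le))
        have hk := key a r2 r1 ha hr1n hc
        rw [← hK_def] at hk
        have hr12δ : r2 - r1 ≤ δ := (le_abs_self _).trans ((abs_sub_comm r2 r1) ▸ hrδ)
        have hr2a1 : r2 ^ (a+1) ≤ M ^ (a+1) := Real.rpow_le_rpow hr2n hr2M (by linarith)
        have h1 : (r2 ^ a - r1 ^ a) * r2 ^ 2 ≤ r2 ^ 2 * (r2 ^ a - r1 ^ a) := by ring_nf; exact le_rfl
        calc |r1 ^ a - r2 ^ a| * |w2.im| ≤ (r2 ^ a - r1 ^ a) * (s2 ^ 2 * r2 ^ 2) := by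
              rw [habs]
              exact mul_le_mul_of_nonneg_left hw2im (sub_nonneg.mpr (Real.rpow_le_rpow hr1n hc ha.le))
          _ = ((r2 ^ a - r1 ^ a) * r2 ^ 2) * s2 ^ 2 := by ring
          _ ≤ (K * (r2 - r1) * r2 ^ (a+1)) * M ^ 2 := by
              refine mul_le_mul (h1.trans hk) hs2M (by positivity) ?_
              have : 0 ≤ r2 - r1 := by linarith
              positivity
          _ ≤ K * δ * M ^ (a+1) * M ^ 2 := by
              refine mul_le_mul_of_nonneg_right ?_ (by positivity)
              refine mul3 hK.le (by linarith) (Real.rpow_nonneg hr2n _) le_rfl hr12δ hr2a1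
    -- combine
    have hsplit : |r1 ^ a * w1.im - r2 ^ a * w2.im|
        ≤ r1 ^ a * |w1.im - w2.im| + |r1 ^ a - r2 ^ a| * |w2.im| := by
      have e : r1 ^ a * w1.im - r2 ^ a * w2.im
          = r1 ^ a * (w1.im - w2.im) + (r1 ^ a - r2 ^ a) * w2.im := by ring
      rw [e]
      calc |r1 ^ a * (w1.im - w2.im) + (r1 ^ a - r2 ^ a) * w2.im|
          ≤ |r1 ^ a * (w1.im - w2.im)| + |(r1 ^ a - r2 ^ a) * w2.im| := abs_add_le _ _
        _ = r1 ^ a * |w1.im - w2.im| + |r1 ^ a - r2 ^ a| * |w2.im| := by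
            rw [abs_mul, abs_mul, abs_of_nonneg (Real.rpow_nonneg hr1n a)]
    have e3 : M ^ a * M ^ (3:ℕ) = M ^ (a + 3) := by
      rw [Real.rpow_add hM]; congr 1; rw [← Real.rpow_natCast M 3]; norm_num
    have e2 : M ^ (a+1) * M ^ (2:ℕ) = M ^ (a + 3) := by
      rw [Real.rpow_add_one hM.ne', ← e3]; ring
    calc |r1 ^ a * w1.im - r2 ^ a * w2.im|
        ≤ r1 ^ a * |w1.im - w2.im| + |r1 ^ a - r2 ^ a| * |w2.im| := hsplit
      _ ≤ M ^ a * (2 * δ * M ^ 3) + K * δ * M ^ (a + 1) * M ^ 2 := add_le_add hT1 hT2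
      _ = 2 * δ * (M ^ a * M ^ (3:ℕ)) + K * δ * (M ^ (a+1) * M ^ (2:ℕ)) := by ring
      _ = (2 + K) * δ * M ^ (a + 3) := by rw [e3, e2]; ring
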